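/- Let (Y, F) be a measure-preserving system with a Gibbs measure μ_Φ: there is K > 0 such that K^{-1} ≤ μ_Φ(Z_{τ^k(x)}[x]) / e^{S_k Φ(x)} ≤ K for a.e. x and all k, where τ^k(x) = τ(x) + τ(F x) + ⋯ + τ(F^{k-1} x) and Φ(x) = S_{τ(x)} φ(x) for a bounded function φ. If τ(F^k(x)) ≤ κ log k eventually (a.e. x), then for a.e. x there exists n₀ such that for all n ≥ n₀, n^{-κ'} ≤ μ_Φ(Z_n[x]) / e^{S_n φ(x)} ≤ n^{κ'}, where κ' = κ (sup|φ| + 1). -/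
import Mathlib


open MeasureTheory Set Filter
open scoped ENNReal

/-- Let `F = f^τ` be an induced system with induced potential
`Φ(x) = S_{τ(x)} φ(x)` for a bounded `φ` (`|φ| ≤ M`), nested cylinders `Z n x`, and a
Gibbs measure `μΦ`: `K⁻¹ ≤ μΦ(Z_{τ^k(x)}[x]) / e^(S_k Φ(x)) ≤ K` a.e., where
`τ^k(x) = Σ_{j<k} τ(F^j x)`. If a.e. `τ(F^k x) ≤ κ log k` eventually, then a.e. there is
`n₀` such that for all `n ≥ n₀`,
`n^(-κ') ≤ μΦ(Z_n[x]) / e^(S_n φ(x)) ≤ n^κ'` with `κ' = κ(M + 1)`. -/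
theorem stmt11 {Y : Type*} [MeasurableSpace Y] (μΦ : Measure Y) [IsProbabilityMeasure μΦ]
    (f : Y → Y) (τ : Y → ℕ) (hτ1 : ∀ x, 1 ≤ τ x)
    (F : Y → Y) (hF : ∀ x, F x = f^[τ x] x)
    (φ : Y → ℝ) (M : ℝ) (hM : 0 ≤ M) (hφbd : ∀ x, |φ x| ≤ M)
    (Φ : Y → ℝ) (hΦ : ∀ x, Φ x = ∑ i ∈ Finset.range (τ x), φ (f^[i] x))
    (Z : ℕ → Y → Set Y) (hnest : ∀ x, ∀ m n : ℕ, m ≤ n → Z n x ⊆ Z m x)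
    (K : ℝ) (hK : 1 ≤ K)
    (hGibbs : ∀ᵐ x ∂μΦ, ∀ k : ℕ,
      K⁻¹ ≤ (μΦ (Z (∑ j ∈ Finset.range k, τ (F^[j] x)) x)).toReal /
          Real.exp (∑ j ∈ Finset.range k, Φ (F^[j] x)) ∧
        (μΦ (Z (∑ j ∈ Finset.range k, τ (F^[j] x)) x)).toReal /
          Real.exp (∑ j ∈ Finset.range k, Φ (F^[j] x)) ≤ K)
    (κ : ℝ) (hκ : 0 < κ)
    (hgrowth : ∀ᵐ x ∂μΦ, ∃ k₀ : ℕ, ∀ k ≥ k₀, (τ (F^[k] x) : ℝ) ≤ κ * Real.log k) :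
    ∀ᵐ x ∂μΦ, ∃ n₀ : ℕ, ∀ n ≥ n₀,
      (n : ℝ) ^ (-(κ * (M + 1))) ≤
          (μΦ (Z n x)).toReal / Real.exp (∑ i ∈ Finset.range n, φ (f^[i] x)) ∧
        (μΦ (Z n x)).toReal / Real.exp (∑ i ∈ Finset.range n, φ (f^[i] x)) ≤
          (n : ℝ) ^ (κ * (M + 1)) := by
  classical
  have hK0 : (0:ℝ) < K := lt_of_lt_of_le one_pos hK
  filter_upwards [hGibbs, hgrowth] with x hG hg
  obtain ⟨k₀, hg⟩ := hg
  set T : ℕ → ℕ := fun k => ∑ j ∈ Finset.range k, τ (F^[j] x) with hT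
  have hTsucc : ∀ k, T (k+1) = T k + τ (F^[k] x) := fun k => Finset.sum_range_succ _ _
  have hiter : ∀ j, F^[j] x = f^[T j] x := by
    intro j
    induction j with
    | zero => simp [hT]
    | succ j ih =>
      calc F^[j+1] x = F (F^[j] x) := Function.iterate_succ_apply' F j x
        _ = f^[τ (F^[j] x)] (F^[j] x) := hF _
        _ = f^[τ (F^[j] x)] (f^[T j] x) := congrArg _ ih
        _ = f^[τ (F^[j] x) + T j] x := (Function.iterate_add_apply f _ _ x).symm
        _ = f^[T (j+1)] x := by rw [hTsucc, Nat.add_comm]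
  have hTlt : ∀ k, T k < T (k+1) := fun k => by
    have := hτ1 (F^[k] x); rw [hTsucc]; omega
  have hTmono : StrictMono T := strictMono_nat_of_lt_succ hTlt
  have hle : ∀ k, k ≤ T k := fun k => hTmono.le_apply
  set S : ℕ → ℝ := fun a => ∑ i ∈ Finset.range a, φ (f^[i] x) with hS
  have hsum : ∀ k, ∑ j ∈ Finset.range k, Φ (F^[j] x) = S (T k) := by
    intro k
    induction k with
    | zero => simp [hS, hT]
    | succ k ih =>
      rw [Finset.sum_range_succ, ih]
      have : S (T (k+1)) = S (T k) + ∑ i ∈ Finset.range (τ (F^[k] x)), φ (f^[T k + i] x) := by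
        simp only [hS, hTsucc]
        exact Finset.sum_range_add (fun i => φ (f^[i] x)) (T k) (τ (F^[k] x))
      rw [this]
      congr 1
      rw [hΦ, hiter k]
      refine Finset.sum_congr rfl fun i _ => ?_
      rw [← Function.iterate_add_apply, Nat.add_comm]
  have hdiff : ∀ a b : ℕ, a ≤ b → |S b - S a| ≤ M * ((b:ℝ) - a) := by
    intro a b hab
    obtain ⟨c, rfl⟩ := Nat.exists_eq_add_of_le hab
    have hsab : S (a + c) = S a + ∑ i ∈ Finset.range c, φ (f^[a + i] x) :=
      Finset.sum_range_add (fun i => φ (f^[i] x)) a c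
    rw [hsab]
    have h1 : |∑ i ∈ Finset.range c, φ (f^[a + i] x)| ≤ M * c := by
      calc |∑ i ∈ Finset.range c, φ (f^[a + i] x)|
          ≤ ∑ i ∈ Finset.range c, |φ (f^[a + i] x)| := Finset.abs_sum_le_sum_abs _ _
        _ ≤ ∑ _i ∈ Finset.range c, M := Finset.sum_le_sum fun i _ => hφbd _
        _ = M * c := by rw [Finset.sum_const, Finset.card_range]; ring
    have : ((a + c : ℕ) : ℝ) - a = c := by push_cast; ring
    rw [this]
    simpa using h1
  have hG' : ∀ k, K⁻¹ ≤ (μΦ (Z (T k) x)).toReal / Real.exp (S (T k)) ∧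
      (μΦ (Z (T k) x)).toReal / Real.exp (S (T k)) ≤ K := by
    intro k
    have h := hG k
    rw [hsum k] at h
    exact h
  -- choose N making K ≤ n^κ
  obtain ⟨N, hN⟩ : ∃ N : ℕ, ∀ n : ℕ, N ≤ n → K ≤ Real.exp (Real.log n * κ) := by
    refine ⟨⌈Real.exp (Real.log K / κ)⌉₊ + 1, fun n hn => ?_⟩
    have hceil : Real.exp (Real.log K / κ) ≤ (⌈Real.exp (Real.log K / κ)⌉₊ : ℝ) :=
      Nat.le_ceil _
    have hcast : ((⌈Real.exp (Real.log K / κ)⌉₊ : ℕ) : ℝ) ≤ (n : ℝ) := by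
      exact_mod_cast Nat.le_of_succ_le hn
    have h1 : Real.exp (Real.log K / κ) ≤ (n : ℝ) := le_trans hceil hcast
    have hnpos : (0:ℝ) < n := lt_of_lt_of_le (Real.exp_pos _) h1
    have h2 : Real.log K / κ ≤ Real.log n := by
      rw [← Real.log_exp (Real.log K / κ)]
      exact Real.log_le_log (Real.exp_pos _) h1
    have h3 : Real.log K ≤ Real.log n * κ := by
      rw [div_le_iff₀ hκ] at h2; linarith
    calc K = Real.exp (Real.log K) := (Real.exp_log hK0).symm
      _ ≤ Real.exp (Real.log n * κ) := Real.exp_le_exp.mpr h3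
  refine ⟨max (max 2 (T (k₀+1) + 1)) N, fun n hn => ?_⟩
  have hn2 : 2 ≤ n := le_trans (le_max_left _ _) (le_trans (le_max_left _ _) hn)
  have hnT : T (k₀+1) < n := by
    have := le_trans (le_max_right 2 (T (k₀+1) + 1)) (le_trans (le_max_left _ _) hn)
    omega
  have hnK : K ≤ Real.exp (Real.log n * κ) := hN n (le_trans (le_max_right _ _) hn)
  have hnpos : (0:ℝ) < (n:ℝ) := by
    have : 0 < n := by omega
    exact_mod_cast this
  have hn1R : (1:ℝ) ≤ (n:ℝ) := by
    have : 1 ≤ n := by omega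
    exact_mod_cast this
  have hlognn : 0 ≤ Real.log n := Real.log_nonneg hn1R
  -- locate n between consecutive return times
  have hex : ∃ k, n ≤ T k := ⟨n, hle n⟩
  have hkspec : n ≤ T (Nat.find hex) := Nat.find_spec hex
  have hkpos : Nat.find hex ≠ 0 := by
    intro h
    rw [h] at hkspec
    simp [hT] at hkspec
    omega
  obtain ⟨m, hm⟩ : ∃ m, Nat.find hex = m + 1 := ⟨Nat.find hex - 1, by omega⟩
  have h1 : n ≤ T (m+1) := hm ▸ hkspec
  have h2 : T m < n := by
    have := Nat.find_min hex (show m < Nat.find hex by omega)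
    omega
  have hmk : k₀ < m := by
    by_contra h
    push_neg at h
    have : T (m+1) ≤ T (k₀+1) := hTmono.monotone (by omega)
    omega
  have hmn : m < n := lt_of_le_of_lt (hle m) h2
  have hτm : (τ (F^[m] x) : ℝ) ≤ κ * Real.log n := by
    have hgm := hg m (le_of_lt hmk)
    have hm0 : (0:ℝ) < (m:ℝ) := by
      have : 0 < m := by omega
      exact_mod_cast this
    have hlog : Real.log m ≤ Real.log n := Real.log_le_log hm0 (by exact_mod_cast hmn.le)
    calc (τ (F^[m] x) : ℝ) ≤ κ * Real.log m := hgm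
      _ ≤ κ * Real.log n := mul_le_mul_of_nonneg_left hlog hκ.le
  have hEpos : ∀ a : ℕ, 0 < Real.exp (S a) := fun a => Real.exp_pos _
  have hmono : ∀ a b : ℕ, a ≤ b → (μΦ (Z b x)).toReal ≤ (μΦ (Z a x)).toReal := fun a b hab =>
    ENNReal.toReal_mono (measure_ne_top _ _) (measure_mono (hnest x a b hab))
  have hUp1 : (μΦ (Z (T m) x)).toReal ≤ K * Real.exp (S (T m)) := by
    have h := (hG' m).2
    rwa [div_le_iff₀ (hEpos _)] at h
  have hLow1 : K⁻¹ * Real.exp (S (T (m+1))) ≤ (μΦ (Z (T (m+1)) x)).toReal := by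
    have h := (hG' (m+1)).1
    rwa [le_div_iff₀ (hEpos _)] at h
  -- Birkhoff-sum difference bounds
  have hsub1 : (n:ℝ) - T m ≤ (τ (F^[m] x) : ℝ) := by
    have : n ≤ T m + τ (F^[m] x) := by rw [← hTsucc]; exact h1
    have := (Nat.cast_le (α := ℝ)).mpr this
    push_cast at this ⊢
    linarith
  have hsub2 : ((T (m+1) : ℕ) : ℝ) - n ≤ (τ (F^[m] x) : ℝ) := by
    have h2' : (T m : ℝ) ≤ (n : ℝ) := by exact_mod_cast h2.le
    have : ((T (m+1) : ℕ) : ℝ) = (T m : ℝ) + (τ (F^[m] x) : ℝ) := by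
      rw [hTsucc]; push_cast; ring
    linarith
  have hd1 : S (T m) - S n ≤ M * (κ * Real.log n) := by
    have h := hdiff (T m) n h2.le
    have habs : S (T m) - S n ≤ |S n - S (T m)| := by
      rw [abs_sub_comm]; exact le_abs_self _
    have hstep : M * ((n:ℝ) - T m) ≤ M * (κ * Real.log n) :=
      mul_le_mul_of_nonneg_left (le_trans hsub1 hτm) hM
    linarith
  have hd2 : -(M * (κ * Real.log n)) ≤ S (T (m+1)) - S n := by
    have h := hdiff n (T (m+1)) h1
    have habs : -(S (T (m+1)) - S n) ≤ |S (T (m+1)) - S n| := neg_le_abs _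
    have hstep : M * (((T (m+1) : ℕ) : ℝ) - n) ≤ M * (κ * Real.log n) :=
      mul_le_mul_of_nonneg_left (le_trans hsub2 hτm) hM
    linarith
  have hrpow_pos : (n:ℝ) ^ (κ * (M + 1)) = Real.exp (Real.log n * (κ * (M + 1))) :=
    Real.rpow_def_of_pos hnpos _
  have hrpow_neg : (n:ℝ) ^ (-(κ * (M + 1))) = Real.exp (Real.log n * (-(κ * (M + 1)))) :=
    Real.rpow_def_of_pos hnpos _
  constructor
  · -- lower bound
    rw [hrpow_neg]
    have key : Real.exp (Real.log n * (-(κ * (M + 1)))) =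
        Real.exp (-(Real.log n * κ)) * Real.exp (-(M * (κ * Real.log n))) := by
      rw [← Real.exp_add]; ring_nf
    rw [key]
    have hKinv : Real.exp (-(Real.log n * κ)) ≤ K⁻¹ := by
      rw [Real.exp_neg]
      exact inv_anti₀ hK0 hnK
    have hexp2 : Real.exp (-(M * (κ * Real.log n))) ≤ Real.exp (S (T (m+1)) - S n) :=
      Real.exp_le_exp.mpr hd2
    calc Real.exp (-(Real.log n * κ)) * Real.exp (-(M * (κ * Real.log n)))
        ≤ K⁻¹ * Real.exp (S (T (m+1)) - S n) :=
          mul_le_mul hKinv hexp2 (Real.exp_pos _).le (by positivity)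
      _ = K⁻¹ * Real.exp (S (T (m+1))) / Real.exp (S n) := by
          rw [Real.exp_sub]; ring
      _ ≤ (μΦ (Z (T (m+1)) x)).toReal / Real.exp (S n) :=
          (div_le_div_iff_of_pos_right (hEpos n)).mpr hLow1
      _ ≤ (μΦ (Z n x)).toReal / Real.exp (S n) :=
          (div_le_div_iff_of_pos_right (hEpos n)).mpr (hmono n (T (m+1)) h1)
  · -- upper bound
    rw [hrpow_pos]
    calc (μΦ (Z n x)).toReal / Real.exp (S n)
        ≤ (μΦ (Z (T m) x)).toReal / Real.exp (S n) :=
          (div_le_div_iff_of_pos_right (hEpos n)).mpr (hmono (T m) n h2.le)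
      _ ≤ K * Real.exp (S (T m)) / Real.exp (S n) :=
          (div_le_div_iff_of_pos_right (hEpos n)).mpr hUp1
      _ = K * Real.exp (S (T m) - S n) := by rw [Real.exp_sub]; ring
      _ ≤ Real.exp (Real.log n * κ) * Real.exp (M * (κ * Real.log n)) :=
          mul_le_mul hnK (Real.exp_le_exp.mpr hd1) (Real.exp_pos _).le
            (Real.exp_pos _).le
      _ = Real.exp (Real.log n * (κ * (M + 1))) := by rw [← Real.exp_add]; ring_nf
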